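/- With γ(z) = (q²e^{-2iπz}; q²)_∞ / (e^{-2iπz/τ}; q^{-2/τ²})_∞, the function γ satisfies the difference equation γ(z+τ)/γ(z) = 1 - e^{-2iπz} at every point where both sides are defined. -/

import Mathlib

open Complex

lemma hasProd_zero_of_exists_zero {f : ℕ → ℂ} (k : ℕ) (hk : f k = 0) : HasProd f 0 := by
  have : ∀ᶠ (s : Finset ℕ) in Filter.atTop, ∏ i ∈ s, f i = 0 := by
    filter_upwards [Filter.eventually_ge_atTop {k}] with s hs
    exact Finset.prod_eq_zero (hs (Finset.mem_singleton_self k)) hk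
  exact Filter.Tendsto.congr' (this.mono fun s hs => hs.symm) tendsto_const_nhds

lemma multipliable_one_sub {a : ℕ → ℂ} (ha : Summable a) :
    Multipliable (fun n => 1 - a n) := by
  by_cases hz : ∃ k, 1 - a k = 0
  · obtain ⟨k, hk⟩ := hz
    exact ⟨0, hasProd_zero_of_exists_zero k hk⟩
  · push_neg at hz
    have := Complex.multipliable_of_summable_log (f := fun n => 1 - a n) ?_
    · exact this
    have htend : Filter.Tendsto a Filter.atTop (nhds 0) := ha.tendsto_atTop_zero
    have hev : ∀ᶠ n in Filter.atTop, ‖Complex.log (1 - a n)‖ ≤ (3/2) * ‖a n‖ := by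
      filter_upwards [htend.eventually (Metric.ball_mem_nhds 0 (by norm_num : (0:ℝ) < 1/2))]
        with n hn
      have : ‖-a n‖ ≤ 1/2 := by
        rw [norm_neg]; simpa [dist_eq_norm] using hn.le
      have := Complex.norm_log_one_add_half_le_self this
      simpa [sub_eq_add_neg, norm_neg] using this
    exact Summable.of_norm_bounded_eventually_nat ((ha.norm.mul_left (3/2))) hev

/-- Numerator `(q² e^{-2iπz}; q²)_∞ = ∏_{n≥1} (1 - e^{-2iπ(z - nτ)})` with `q = e^{iπτ}`. -/
noncomputable def gammaNum (τ z : ℂ) : ℂ :=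
  ∏' n : ℕ, (1 - Complex.exp (-(2 * Real.pi * Complex.I) * (z - ((n : ℂ) + 1) * τ)))

/-- Denominator `(e^{-2iπz/τ}; q^{-2/τ²})_∞ = ∏_{n≥0} (1 - e^{-2iπ(z+n)/τ})`. -/
noncomputable def gammaDen (τ z : ℂ) : ℂ :=
  ∏' n : ℕ, (1 - Complex.exp (-(2 * Real.pi * Complex.I) * (z + (n : ℂ)) / τ))

/-- The γ-function as a ratio of two infinite products. -/
noncomputable def gammaFn (τ z : ℂ) : ℂ := gammaNum τ z / gammaDen τ z

lemma summable_num (τ : ℂ) (hτ : 0 < τ.im) (w : ℂ) :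
    Summable (fun n : ℕ => Complex.exp (-(2 * Real.pi * Complex.I) * (w - (n : ℂ) * τ))) := by
  have hr : ‖Complex.exp (2 * Real.pi * Complex.I * τ)‖ < 1 := by
    rw [Complex.norm_exp, Real.exp_lt_one_iff]
    simp [Complex.mul_re, Complex.mul_im]
    positivity
  have := (summable_geometric_of_norm_lt_one hr).mul_left
    (Complex.exp (-(2 * Real.pi * Complex.I) * w))
  apply this.congr
  intro n
  rw [← Complex.exp_nat_mul, ← Complex.exp_add]
  ring_nf

lemma multipliable_num (τ : ℂ) (hτ : 0 < τ.im) (w : ℂ) :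
    Multipliable (fun n : ℕ => 1 - Complex.exp (-(2 * Real.pi * Complex.I) * (w - (n : ℂ) * τ))) :=
  multipliable_one_sub (summable_num τ hτ w)

lemma multipliable_num_shift (τ : ℂ) (hτ : 0 < τ.im) (w : ℂ) :
    Multipliable (fun n : ℕ =>
      1 - Complex.exp (-(2 * Real.pi * Complex.I) * (w - ((n : ℂ) + 1) * τ))) :=
  ((multipliable_num τ hτ (w - τ)).congr (fun n => by
    congr 2
    ring))

theorem stmt2 (τ : ℂ) (hτ : 0 < τ.im) (z : ℂ)
    (h : gammaFn τ z ≠ 0) (h' : gammaDen τ (z + τ) ≠ 0) :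
    gammaFn τ (z + τ) / gammaFn τ z = 1 - Complex.exp (-(2 * Real.pi * Complex.I) * z) := by
  have hτ0 : τ ≠ 0 := fun hc => by simp [hc] at hτ
  obtain ⟨hN, hD⟩ := div_ne_zero_iff.mp h
  -- denominator invariance
  have hden : gammaDen τ (z + τ) = gammaDen τ z := by
    unfold gammaDen
    apply tprod_congr
    intro n
    congr 1
    have : -(2 * ↑Real.pi * Complex.I) * (z + ↑τ + ↑n) / τ
        = -(2 * ↑Real.pi * Complex.I) * (z + ↑n) / τ + (-(2 * ↑Real.pi * Complex.I)) := by
      field_simp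
      ring
    rw [this, Complex.exp_add]
    have h1 : Complex.exp (-(2 * ↑Real.pi * Complex.I)) = 1 := by
      rw [Complex.exp_neg, Complex.exp_two_pi_mul_I, inv_one]
    rw [h1, mul_one]
  -- numerator shift
  have hnum : gammaNum τ (z + τ)
      = (1 - Complex.exp (-(2 * Real.pi * Complex.I) * z)) * gammaNum τ z := by
    have hre : gammaNum τ (z + τ)
        = ∏' n : ℕ, (1 - Complex.exp (-(2 * Real.pi * Complex.I) * (z - (n : ℂ) * τ))) := by
      unfold gammaNum
      apply tprod_congr
      intro n
      congr 2
      ring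
    have hshift : Multipliable (fun n : ℕ =>
        1 - Complex.exp (-(2 * Real.pi * Complex.I) * (z - (((n : ℕ) + 1 : ℕ) : ℂ) * τ))) :=
      (multipliable_num_shift τ hτ z).congr (fun n => by push_cast; ring_nf)
    rw [hre, tprod_eq_zero_mul'
      (f := fun n : ℕ => 1 - Complex.exp (-(2 * Real.pi * Complex.I) * (z - (n : ℂ) * τ)))
      hshift]
    congr 1
    · norm_num
    · unfold gammaNum
      apply tprod_congr
      intro n
      congr 2
      push_cast
      ring
  have key : gammaFn τ (z + τ)
      = (1 - Complex.exp (-(2 * Real.pi * Complex.I) * z)) * gammaFn τ z := by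
    unfold gammaFn
    rw [hden, hnum, mul_div_assoc]
  rw [key, mul_div_assoc, div_self h, mul_one]
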